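/- arXiv:2103.08133 — 4 statements merged into one kernel-verified Lean document; each statement's English description precedes it below -/
import Mathlib

section
/- Let Σ be an alphabet and L_m a set of finite words over Σ. A set T ⊆ Σ^ω is markable with respect to L_m if and only if for every finite word t and every nonempty finite word u with t·u^ω ∈ T, the set {n ∈ ℕ | the length-n prefix of t·u^ω belongs to L_m} is infinite. (The forward direction follows by applying markability to the decompositions t·u^ω = (t·u^k)·u^ω for every k.) -/
variable {σ : Type*}

/-- The length-`n` prefix of an ω-word `w`: the finite word `w(0)w(1)⋯w(n-1)`. -/
def wPrefix (w : ℕ → σ) (n : ℕ) : List σ := (List.range n).map w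

/-- The ultimately periodic ω-word `t·u^ω` (for `u` nonempty): it starts with `t`
and then repeats `u` forever. -/
def catPow (t u : List σ) (hu : u ≠ []) : ℕ → σ :=
  fun n =>
    if h : n < t.length then t.get ⟨n, h⟩
    else u.get ⟨(n - t.length) % u.length, Nat.mod_lt _ (List.length_pos_iff.mpr hu)⟩

/-- `T` is markable with respect to the marker language `Lm`: for every `t` and
nonempty `u` with `t·u^ω ∈ T`, some length-`n` prefix of `t·u^ω` with `n ≥ |t|`
belongs to `Lm`. -/
def Markable (Lm : Set (List σ)) (T : Set (ℕ → σ)) : Prop :=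
  ∀ (t u : List σ) (hu : u ≠ []), catPow t u hu ∈ T →
    ∃ n, t.length ≤ n ∧ wPrefix (catPow t u hu) n ∈ Lm

/-- `pre(S)`: the set of all finite prefixes of members of the ω-language `S`. -/
def wPre (S : Set (ℕ → σ)) : Set (List σ) := {x | ∃ w ∈ S, ∃ n, x = wPrefix w n}

/-- The prefix-closure of a `*`-language `K`. -/
def precl (K : Set (List σ)) : Set (List σ) := {x | ∃ y ∈ K, x <+: y}

lemma catPow_append (t u : List σ) (hu : u ≠ []) :
    catPow (t ++ u) u hu = catPow t u hu := by
  funext n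
  simp only [catPow, List.get_eq_getElem, List.length_append]
  rcases lt_or_ge n t.length with h | h
  · rw [dif_pos h, dif_pos (by omega)]
    exact List.getElem_append_left h
  · rcases lt_or_ge n (t.length + u.length) with h2 | h2
    · rw [dif_pos h2, dif_neg (by omega)]
      have hlt : n - t.length < u.length := by omega
      rw [List.getElem_append_right (by omega)]
      congr 1
      simp [Nat.mod_eq_of_lt hlt]
    · rw [dif_neg (by omega), dif_neg (by omega)]
      have hge : n - t.length ≥ u.length := by omega
      congr 1
      conv_rhs => rw [Nat.mod_eq_sub_mod hge]
      congr 1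
      omega

lemma exists_long_decomp (t u : List σ) (hu : u ≠ []) (N : ℕ) :
    ∃ t' : List σ, catPow t' u hu = catPow t u hu ∧ N ≤ t'.length := by
  induction N with
  | zero => exact ⟨t, rfl, Nat.zero_le _⟩
  | succ N ih =>
    obtain ⟨t', h1, h2⟩ := ih
    refine ⟨t' ++ u, by rw [catPow_append, h1], ?_⟩
    have : 0 < u.length := List.length_pos_iff.mpr hu
    simp; omega

theorem markable_iff_infinitely_often (Lm : Set (List σ)) (T : Set (ℕ → σ)) :
    Markable Lm T ↔
      ∀ (t u : List σ) (hu : u ≠ []), catPow t u hu ∈ T →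
        {n : ℕ | wPrefix (catPow t u hu) n ∈ Lm}.Infinite := by
  constructor
  · intro hM t u hu hT
    apply Set.infinite_of_not_bddAbove
    rintro ⟨N, hN⟩
    obtain ⟨t', h1, h2⟩ := exists_long_decomp t u hu (N + 1)
    obtain ⟨n, hn1, hn2⟩ := hM t' u hu (by rwa [h1])
    rw [h1] at hn2
    have := hN hn2
    omega
  · intro h t u hu hT
    obtain ⟨n, hn, hgt⟩ := (h t u hu hT).exists_gt t.length
    exact ⟨n, le_of_lt hgt, hn⟩
end

section
/- Let M be a DFA over alphabet Σ with accepting set Q_m, accepted language L_m(M), and Büchi-accepted set B(M). If T ⊆ Σ^ω is markable with respect to L_m(M), then every ultimately periodic member of T belongs to B(M): for all finite words t, u with u nonempty and t·u^ω ∈ T, the run of t·u^ω in M visits Q_m infinitely often. -/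
variable {σ : Type*}

/-- The Büchi-accepted set of a DFA `M`: ω-words whose run visits `M.accept`
infinitely often. -/
def BuchiAcc {Q : Type*} (M : DFA σ Q) : Set (ℕ → σ) :=
  {w | {n : ℕ | M.eval (wPrefix w n) ∈ M.accept}.Infinite}


lemma wPrefix_length (w : ℕ → σ) (n : ℕ) : (wPrefix w n).length = n := by
  simp [wPrefix]

lemma wPrefix_get (w : ℕ → σ) (n i : ℕ) (h : i < (wPrefix w n).length) :
    (wPrefix w n).get ⟨i, h⟩ = w i := by
  simp [wPrefix]

lemma catPow_shift (t u : List σ) (hu : u ≠ []) (k : ℕ) :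
    catPow (wPrefix (catPow t u hu) (t.length + k * u.length)) u hu = catPow t u hu := by
  funext i
  by_cases h1 : i < t.length + k * u.length
  · have h1' : i < (wPrefix (catPow t u hu) (t.length + k * u.length)).length := by
      rw [wPrefix_length]; exact h1
    show dite _ _ _ = _
    rw [dif_pos h1', wPrefix_get]
  · have h1' : ¬ i < (wPrefix (catPow t u hu) (t.length + k * u.length)).length := by
      rw [wPrefix_length]; exact h1
    have ht : ¬ i < t.length := by omega
    show dite _ _ _ = _
    rw [dif_neg h1']
    conv_rhs => rw [catPow]
    rw [dif_neg ht]
    congr 1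
    apply Fin.ext
    show (i - (wPrefix (catPow t u hu) (t.length + k * u.length)).length) % u.length
        = (i - t.length) % u.length
    rw [wPrefix_length]
    conv_rhs => rw [show i - t.length = (i - (t.length + k * u.length)) + k * u.length by omega]
    rw [Nat.add_mul_mod_self_right]

theorem ultPer_mem_buchi_of_markable {Q : Type*} (M : DFA σ Q) (T : Set (ℕ → σ))
    (hT : Markable M.accepts T) :
    ∀ (t u : List σ) (hu : u ≠ []), catPow t u hu ∈ T →
      catPow t u hu ∈ BuchiAcc M := by
  intro t u hu hmem
  apply Set.infinite_of_forall_exists_gt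
  intro a
  set w := catPow t u hu with hw
  have hk := hT (wPrefix w (t.length + (a + 1) * u.length)) u hu
    (by rw [catPow_shift]; exact hmem)
  rw [catPow_shift] at hk
  obtain ⟨n, hn1, hn2⟩ := hk
  rw [wPrefix_length] at hn1
  refine ⟨n, hn2, ?_⟩
  have hu1 : 1 ≤ u.length := List.length_pos_iff.mpr hu
  nlinarith
end

section
/- Let M be a DFA over alphabet Σ with a finite state type Q, accepting set Q_m, and accepted language L_m(M). If T ⊆ Σ^ω is markable with respect to L_m(M), then for every ultimately periodic word t·u^ω ∈ T (u nonempty) there exists a single accepting state q ∈ Q_m that is visited infinitely often by the run of t·u^ω in M, i.e., the set {n ∈ ℕ | the run state q_n of t·u^ω equals q} is infinite. -/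
variable {σ : Type*}

theorem exists_accepting_state_visited_infinitely {Q : Type*} [Finite Q]
    (M : DFA σ Q) (T : Set (ℕ → σ)) (hT : Markable M.accepts T) :
    ∀ (t u : List σ) (hu : u ≠ []), catPow t u hu ∈ T →
      ∃ q ∈ M.accept, {n : ℕ | M.eval (wPrefix (catPow t u hu) n) = q}.Infinite := by
  intro t u hu hw
  set w := catPow t u hu with hwdef
  have hm : 0 < u.length := List.length_pos_iff.mpr hu
  have key : ∀ N : ℕ, ∃ s : List σ, N ≤ s.length ∧ catPow s u hu = w := by
    intro N
    induction N with
    | zero => exact ⟨t, Nat.zero_le _, rfl⟩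
    | succ N ih =>
      obtain ⟨s, hs, he⟩ := ih
      exact ⟨s ++ u, by simp only [List.length_append]; omega,
        (catPow_append s u hu).trans he⟩
  have hA : {n : ℕ | M.eval (wPrefix w n) ∈ M.accept}.Infinite := by
    apply Set.infinite_of_not_bddAbove
    rintro ⟨N, hN⟩
    obtain ⟨s, hs, he⟩ := key (N + 1)
    obtain ⟨n, hn1, hn2⟩ := hT s u hu (by rw [he]; exact hw)
    rw [he] at hn2
    have hmem : n ∈ {n : ℕ | M.eval (wPrefix w n) ∈ M.accept} := hn2
    have := hN hmem
    omega
  by_contra hcon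
  push_neg at hcon
  have hsub : {n : ℕ | M.eval (wPrefix w n) ∈ M.accept} ⊆
      ⋃ q ∈ M.accept, {n : ℕ | M.eval (wPrefix w n) = q} := by
    intro n hn
    exact Set.mem_biUnion hn rfl
  exact hA (((Set.Finite.biUnion (Set.toFinite M.accept)
    (fun q hq => hcon q hq)).subset hsub))
end

section
/- Let Σ be an alphabet, L ⊆ Σ* a prefix-closed plant language, Σ_u ⊆ Σ a set of uncontrollable events, L_m ⊆ Σ* a marker language, E_s ⊆ Σ* a safety specification, and E_l ⊆ Σ^ω a legal specification. Let C be the collection of pairs (K, T) with K ⊆ Σ* and T ⊆ Σ^ω such that: K ⊆ E_s, K is *-controllable with respect to L and Σ_u, K is *-closed with respect to L_m, T ⊆ E_l, T is markable with respect to L_m, and K̄ = pre(T). Then C contains the pair (∅, ∅), C is closed under arbitrary (componentwise) unions of families of its members, and consequently C contains a unique supremal element, namely the componentwise union of all pairs in C. -/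
variable {σ : Type*}

/-- `K` is `*`-controllable with respect to plant language `L` and uncontrollable
events `Su`. -/
def StarControllable (L : Set (List σ)) (Su : Set σ) (K : Set (List σ)) : Prop :=
  ∀ s ∈ precl K, ∀ e ∈ Su, s ++ [e] ∈ L → s ++ [e] ∈ precl K

/-- `K` is `*`-closed with respect to the marker language `Lm`. -/
def StarClosed (Lm K : Set (List σ)) : Prop := K = precl K ∩ Lm

/-- The collection of pairs `(K, T)` satisfying: `K ⊆ Es`, `K` `*`-controllable
w.r.t. `L` and `Su`, `K` `*`-closed w.r.t. `Lm`, `T ⊆ El`, `T` markable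
w.r.t. `Lm`, and `K̄ = pre(T)`. -/
def CPairs (L : Set (List σ)) (Su : Set σ) (Lm Es : Set (List σ))
    (El : Set (ℕ → σ)) : Set (Set (List σ) × Set (ℕ → σ)) :=
  {p | p.1 ⊆ Es ∧ StarControllable L Su p.1 ∧ StarClosed Lm p.1 ∧
       p.2 ⊆ El ∧ Markable Lm p.2 ∧ precl p.1 = wPre p.2}

/-- Componentwise union of all pairs in `CPairs L Su Lm Es El`. -/
def supPair (L : Set (List σ)) (Su : Set σ) (Lm Es : Set (List σ))
    (El : Set (ℕ → σ)) : Set (List σ) × Set (ℕ → σ) :=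
  ({x | ∃ p ∈ CPairs L Su Lm Es El, x ∈ p.1},
   {w | ∃ p ∈ CPairs L Su Lm Es El, w ∈ p.2})


lemma precl_empty : precl (∅ : Set (List σ)) = ∅ := by
  ext x; simp [precl]

lemma wPre_empty : wPre (∅ : Set (ℕ → σ)) = ∅ := by
  ext x; simp [wPre]

lemma precl_iUnion {A : Type*} (K : A → Set (List σ)) :
    precl (⋃ a, K a) = ⋃ a, precl (K a) := by
  ext x
  simp only [precl, Set.mem_setOf_eq, Set.mem_iUnion]
  tauto

lemma wPre_iUnion {A : Type*} (T : A → Set (ℕ → σ)) :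
    wPre (⋃ a, T a) = ⋃ a, wPre (T a) := by
  ext x
  simp only [wPre, Set.mem_setOf_eq, Set.mem_iUnion]
  tauto

lemma cpairs_union (L : Set (List σ)) (Su : Set σ) (Lm Es : Set (List σ))
    (El : Set (ℕ → σ)) (A : Type*) (F : A → Set (List σ) × Set (ℕ → σ))
    (hF : ∀ a, F a ∈ CPairs L Su Lm Es El) :
    ((⋃ a, (F a).1), (⋃ a, (F a).2)) ∈ CPairs L Su Lm Es El := by
  refine ⟨Set.iUnion_subset fun a => (hF a).1, ?_, ?_,
    Set.iUnion_subset fun a => (hF a).2.2.2.1, ?_, ?_⟩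
  · intro s hs e he hLe
    rw [show (((⋃ a, (F a).1), (⋃ a, (F a).2)) : Set (List σ) × Set (ℕ → σ)).1
        = ⋃ a, (F a).1 from rfl, precl_iUnion] at hs ⊢
    obtain ⟨a, ha⟩ := Set.mem_iUnion.mp hs
    exact Set.mem_iUnion.mpr ⟨a, (hF a).2.1 s ha e he hLe⟩
  · show (⋃ a, (F a).1) = precl (⋃ a, (F a).1) ∩ Lm
    rw [precl_iUnion, Set.iUnion_inter]
    exact Set.iUnion_congr fun a => (hF a).2.2.1
  · intro t u hu h
    obtain ⟨a, ha⟩ := Set.mem_iUnion.mp h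
    exact (hF a).2.2.2.2.1 t u hu ha
  · show precl (⋃ a, (F a).1) = wPre (⋃ a, (F a).2)
    rw [precl_iUnion, wPre_iUnion]
    exact Set.iUnion_congr fun a => (hF a).2.2.2.2.2

lemma supPair_eq (L : Set (List σ)) (Su : Set σ) (Lm Es : Set (List σ))
    (El : Set (ℕ → σ)) :
    supPair L Su Lm Es El =
      ((⋃ p : CPairs L Su Lm Es El, (p : Set (List σ) × Set (ℕ → σ)).1),
       (⋃ p : CPairs L Su Lm Es El, (p : Set (List σ) × Set (ℕ → σ)).2)) := by
  unfold supPair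
  refine Prod.ext ?_ ?_ <;> ext x <;>
    simp only [Set.mem_setOf_eq, Set.mem_iUnion, Subtype.exists, exists_prop]


theorem cpairs_has_supremal (L : Set (List σ)) (hL : precl L = L) (Su : Set σ)
    (Lm Es : Set (List σ)) (El : Set (ℕ → σ)) :
    ((∅, ∅) : Set (List σ) × Set (ℕ → σ)) ∈ CPairs L Su Lm Es El ∧
    (∀ (A : Type*) (F : A → Set (List σ) × Set (ℕ → σ)),
      (∀ a, F a ∈ CPairs L Su Lm Es El) →
      ((⋃ a, (F a).1), (⋃ a, (F a).2)) ∈ CPairs L Su Lm Es El) ∧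
    supPair L Su Lm Es El ∈ CPairs L Su Lm Es El ∧
    (∀ p ∈ CPairs L Su Lm Es El,
      p.1 ⊆ (supPair L Su Lm Es El).1 ∧ p.2 ⊆ (supPair L Su Lm Es El).2) ∧
    (∀ q ∈ CPairs L Su Lm Es El,
      (∀ p ∈ CPairs L Su Lm Es El, p.1 ⊆ q.1 ∧ p.2 ⊆ q.2) →
      q = supPair L Su Lm Es El) := by
  have hempty : ((∅, ∅) : Set (List σ) × Set (ℕ → σ)) ∈ CPairs L Su Lm Es El := by
    refine ⟨Set.empty_subset _, ?_, ?_, Set.empty_subset _, ?_, ?_⟩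
    · intro s hs
      rw [show ((∅, ∅) : Set (List σ) × Set (ℕ → σ)).1 = ∅ from rfl,
        precl_empty] at hs
      exact absurd hs (Set.notMem_empty s)
    · show (∅ : Set (List σ)) = precl ∅ ∩ Lm
      rw [precl_empty, Set.empty_inter]
    · intro t u hu h
      exact absurd h (Set.notMem_empty _)
    · show precl (∅ : Set (List σ)) = wPre (∅ : Set (ℕ → σ))
      rw [precl_empty, wPre_empty]
  have hsup : supPair L Su Lm Es El ∈ CPairs L Su Lm Es El := by
    rw [supPair_eq]
    exact cpairs_union L Su Lm Es El (CPairs L Su Lm Es El) Subtype.val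
      (fun a => a.2)
  have hub : ∀ p ∈ CPairs L Su Lm Es El,
      p.1 ⊆ (supPair L Su Lm Es El).1 ∧ p.2 ⊆ (supPair L Su Lm Es El).2 := by
    intro p hp
    exact ⟨fun x hx => ⟨p, hp, hx⟩, fun w hw => ⟨p, hp, hw⟩⟩
  refine ⟨hempty, fun A F hF => cpairs_union L Su Lm Es El A F hF, hsup, hub, ?_⟩
  intro q hq hmax
  have h1 := hub q hq
  have h2 := hmax _ hsup
  exact Prod.ext (Set.Subset.antisymm h1.1 h2.1) (Set.Subset.antisymm h1.2 h2.2)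
end
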